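/- Let F(t, u) denote the right-hand side of the system u₁' = u₁(1-u₁-α₁u₂-δ₁u₃), u₂' = β₂u₂(1-u₂-α₂u₁-δ₂u₄), u₃' = β₃(u₂-u₃), u₄' = β₄[i(t)-u₄-δ₄u₄u₂], where i : ℝ₊ → [0, i_M] is continuous with i_M > 0 and all parameters are positive. If u(0) ∈ ℝ₊⁴, then the system has a unique global solution u with u(t) ∈ ℝ₊⁴ for all t ≥ 0; moreover the solution remains in the compact box [0, max{1,u₁(0)}] × [0, max{1,u₂(0)}] × [0, max{1,u₂(0),u₃(0)}] × [0, max{i_M,u₄(0)}]. -/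

import Mathlib

open Set
open scoped NNReal Topology

private lemma abs_mul_le' {a p B Q : ℝ} (ha : |a| ≤ B) (hp : |p| ≤ Q) : |a * p| ≤ B * Q := by
  rw [abs_mul]
  exact mul_le_mul ha hp (abs_nonneg _) ((abs_nonneg a).trans ha)

private lemma mul_diff_bound {a b p q B Q d e : ℝ} (ha : |a| ≤ B) (hq : |q| ≤ Q)
    (hab : |a - b| ≤ d) (hpq : |p - q| ≤ e) : |a * p - b * q| ≤ B * e + Q * d := by
  have h : a * p - b * q = a * (p - q) + (a - b) * q := by ring
  rw [h]
  calc |a * (p - q) + (a - b) * q| ≤ |a * (p - q)| + |(a - b) * q| := abs_add_le _ _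
    _ ≤ B * e + Q * d := by
        have h1 : |a * (p - q)| ≤ B * e := abs_mul_le' ha hpq
        have h2 : |(a - b) * q| ≤ d * Q := abs_mul_le' hab hq
        nlinarith [h1, h2]

private lemma barrier_ge {g f : ℝ → ℝ} {c : ℝ}
    (hg : ∀ t, 0 ≤ t → HasDerivAt g (f t) t)
    (h0 : c ≤ g 0)
    (hbd : ∀ t, 0 ≤ t → g t ≤ c → 0 ≤ f t) :
    ∀ t, 0 ≤ t → c ≤ g t := by
  intro t₁ ht₁
  by_contra hlt
  push_neg at hlt
  have ht₁0 : 0 < t₁ := by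
    rcases lt_or_eq_of_le ht₁ with h | h
    · exact h
    · exfalso; rw [← h] at hlt; linarith
  have hcont : ContinuousOn g (Icc 0 t₁) := fun s hs =>
    ((hg s hs.1).continuousAt).continuousWithinAt
  have hclosed : IsClosed (Icc 0 t₁ ∩ g ⁻¹' (Ici c)) :=
    hcont.preimage_isClosed_of_isClosed isClosed_Icc isClosed_Ici
  have hcomp : IsCompact (Icc 0 t₁ ∩ g ⁻¹' (Ici c)) :=
    isCompact_Icc.of_isClosed_subset hclosed inter_subset_left
  have hne : (Icc 0 t₁ ∩ g ⁻¹' (Ici c)).Nonempty :=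
    ⟨0, ⟨le_refl 0, ht₁0.le⟩, h0⟩
  set s := sSup (Icc 0 t₁ ∩ g ⁻¹' (Ici c)) with hs_def
  have hsS : s ∈ Icc 0 t₁ ∩ g ⁻¹' (Ici c) := hcomp.sSup_mem hne
  have hs0 : 0 ≤ s := hsS.1.1
  have hs1 : s ≤ t₁ := hsS.1.2
  have hgs : c ≤ g s := hsS.2
  have hst : s < t₁ := lt_of_le_of_ne hs1 (fun h => by rw [h] at hgs; linarith)
  have hlt' : ∀ r, s < r → r ≤ t₁ → g r < c := by
    intro r h1 h2
    by_contra h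
    push_neg at h
    have hr : r ∈ Icc 0 t₁ ∩ g ⁻¹' (Ici c) := ⟨⟨hs0.trans h1.le, h2⟩, h⟩
    have := le_csSup hcomp.bddAbove hr
    linarith
  have hmono : MonotoneOn g (Icc s t₁) := by
    apply monotoneOn_of_deriv_nonneg (convex_Icc s t₁)
      (hcont.mono (Icc_subset_Icc hs0 le_rfl))
    · intro r hr
      rw [interior_Icc] at hr
      exact ((hg r (hs0.trans hr.1.le)).differentiableAt).differentiableWithinAt
    · intro r hr
      rw [interior_Icc] at hr
      have h0r : 0 ≤ r := hs0.trans hr.1.le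
      rw [(hg r h0r).deriv]
      exact hbd r h0r (hlt' r hr.1 hr.2.le).le
  have := hmono ⟨le_rfl, hst.le⟩ ⟨hst.le, le_rfl⟩ hst.le
  linarith

private lemma barrier_le {g f : ℝ → ℝ} {M : ℝ}
    (hg : ∀ t, 0 ≤ t → HasDerivAt g (f t) t)
    (h0 : g 0 ≤ M)
    (hbd : ∀ t, 0 ≤ t → M ≤ g t → f t ≤ 0) :
    ∀ t, 0 ≤ t → g t ≤ M := by
  have h := barrier_ge (g := fun t => -g t) (f := fun t => -f t) (c := -M)
    (fun t ht => (hg t ht).neg) (by simpa using h0)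
    (fun t ht h => by
      simp only [neg_nonneg]
      exact hbd t ht (by simpa using h))
  intro t ht
  have := h t ht
  simp only [neg_le_neg_iff] at this
  linarith

/-- clamp to `[0, m]` -/
private def cl (m x : ℝ) : ℝ := max 0 (min x m)

private lemma cl_nonneg (m x : ℝ) : 0 ≤ cl m x := le_max_left _ _

private lemma cl_le {m : ℝ} (hm : 0 ≤ m) (x : ℝ) : cl m x ≤ m :=
  max_le hm (min_le_right _ _)

private lemma cl_eq {m x : ℝ} (h0 : 0 ≤ x) (hm : x ≤ m) : cl m x = x := by
  rw [cl, min_eq_left hm, max_eq_right h0]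

private lemma cl_eq_zero {m x : ℝ} (hx : x ≤ 0) : cl m x = 0 :=
  max_eq_left ((min_le_left x m).trans hx)

private lemma cl_eq_top {m x : ℝ} (hm : 0 ≤ m) (hx : m ≤ x) : cl m x = m := by
  rw [cl, min_eq_right hx, max_eq_right hm]

private lemma cl_lip (m x y : ℝ) : |cl m x - cl m y| ≤ |x - y| := by
  rw [cl, cl, max_comm 0 (min x m), max_comm 0 (min y m)]
  refine (abs_max_sub_max_le_abs _ _ _).trans ?_
  refine (abs_min_sub_min_le_max x m y m).trans ?_
  simp
set_option maxHeartbeats 4000000 in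
theorem full_system_global_existence_uniqueness
    (α₁ α₂ δ₁ δ₂ δ₄ β₂ β₃ β₄ iM : ℝ)
    (hα₁ : 0 < α₁) (hα₂ : 0 < α₂) (hδ₁ : 0 < δ₁) (hδ₂ : 0 < δ₂) (hδ₄ : 0 < δ₄)
    (hβ₂ : 0 < β₂) (hβ₃ : 0 < β₃) (hβ₄ : 0 < β₄) (hiM : 0 < iM)
    (i : ℝ → ℝ) (hi : Continuous i) (hirange : ∀ t, 0 ≤ t → i t ∈ Set.Icc 0 iM)
    (F : ℝ → (Fin 4 → ℝ) → (Fin 4 → ℝ))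
    (hF : ∀ t x, F t x =
      ![x 0 * (1 - x 0 - α₁ * x 1 - δ₁ * x 2),
        β₂ * x 1 * (1 - x 1 - α₂ * x 0 - δ₂ * x 3),
        β₃ * (x 1 - x 2),
        β₄ * (i t - x 3 - δ₄ * x 3 * x 1)])
    (u₀ : Fin 4 → ℝ) (hu₀ : ∀ j, 0 ≤ u₀ j) :
    ∃ u : ℝ → (Fin 4 → ℝ),
      u 0 = u₀ ∧
      (∀ t, 0 ≤ t → HasDerivAt u (F t (u t)) t) ∧
      (∀ t, 0 ≤ t → ∀ j, 0 ≤ u t j) ∧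
      (∀ t, 0 ≤ t →
        u t 0 ∈ Set.Icc 0 (max 1 (u₀ 0)) ∧
        u t 1 ∈ Set.Icc 0 (max 1 (u₀ 1)) ∧
        u t 2 ∈ Set.Icc 0 (max 1 (max (u₀ 1) (u₀ 2))) ∧
        u t 3 ∈ Set.Icc 0 (max iM (u₀ 3))) ∧
      (∀ v : ℝ → (Fin 4 → ℝ), v 0 = u₀ →
        (∀ t, 0 ≤ t → ∀ j, 0 ≤ v t j) →
        (∀ t, 0 ≤ t → HasDerivAt v (F t (v t)) t) →
        ∀ t, 0 ≤ t → v t = u t) := by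
  -- bounds of the box
  obtain ⟨M0, hM0_def⟩ : ∃ x:ℝ, x = max 1 (u₀ 0) := ⟨_, rfl⟩
  obtain ⟨M1, hM1_def⟩ : ∃ x:ℝ, x = max 1 (u₀ 1) := ⟨_, rfl⟩
  obtain ⟨M2, hM2_def⟩ : ∃ x:ℝ, x = max 1 (max (u₀ 1) (u₀ 2)) := ⟨_, rfl⟩
  obtain ⟨M3, hM3_def⟩ : ∃ x:ℝ, x = max iM (u₀ 3) := ⟨_, rfl⟩
  have hM0 : 1 ≤ M0 := hM0_def ▸ le_max_left _ _
  have hM1 : 1 ≤ M1 := hM1_def ▸ le_max_left _ _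
  have hM2 : 1 ≤ M2 := hM2_def ▸ le_max_left _ _
  have hM3 : iM ≤ M3 := hM3_def ▸ le_max_left _ _
  have hM3pos : 0 < M3 := lt_of_lt_of_le hiM hM3
  have hM12 : M1 ≤ M2 := by rw [hM1_def, hM2_def]; exact max_le_max le_rfl (le_max_left _ _)
  have hu₀0 : u₀ 0 ≤ M0 := hM0_def ▸ le_max_right _ _
  have hu₀1 : u₀ 1 ≤ M1 := hM1_def ▸ le_max_right _ _
  have hu₀2 : u₀ 2 ≤ M2 := hM2_def ▸ le_trans (le_max_right _ _) (le_max_right _ _)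
  have hu₀3 : u₀ 3 ≤ M3 := hM3_def ▸ le_max_right _ _
  obtain ⟨B, hB_def⟩ : ∃ x:ℝ, x = max (max M0 M1) (max M2 M3) := ⟨_, rfl⟩
  have hBM0 : M0 ≤ B := hB_def ▸ le_trans (le_max_left _ _) (le_max_left _ _)
  have hBM1 : M1 ≤ B := hB_def ▸ le_trans (le_max_right _ _) (le_max_left _ _)
  have hBM2 : M2 ≤ B := hB_def ▸ le_trans (le_max_left _ _) (le_max_right _ _)
  have hBM3 : M3 ≤ B := hB_def ▸ le_trans (le_max_right _ _) (le_max_right _ _)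
  have hB1 : 1 ≤ B := le_trans hM0 hBM0
  obtain ⟨Mv, hMv_def⟩ : ∃ x : Fin 4 → ℝ, x = ![M0, M1, M2, M3] := ⟨_, rfl⟩
  have hMvnn : ∀ j, 0 ≤ Mv j := by
    intro j; rw [hMv_def]; fin_cases j <;> simp <;> linarith
  have hMvB : ∀ j, Mv j ≤ B := by
    intro j; rw [hMv_def]; fin_cases j <;> simpa
  obtain ⟨P, hP_def⟩ : ∃ q : (Fin 4 → ℝ) → (Fin 4 → ℝ), q = fun x j => cl (Mv j) (x j) := ⟨_, rfl⟩
  obtain ⟨G, hG_def⟩ : ∃ q : ℝ → (Fin 4 → ℝ) → (Fin 4 → ℝ), q = fun t x => F t (P x) := ⟨_, rfl⟩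
  have hPnn : ∀ x j, 0 ≤ P x j := by rw [hP_def]; exact fun x j => cl_nonneg _ _
  have hPB : ∀ x j, P x j ≤ B := by rw [hP_def]; exact fun x j => (cl_le (hMvnn j) _).trans (hMvB j)
  have hPabs : ∀ x j, |P x j| ≤ B := fun x j => abs_le.mpr ⟨by linarith [hPnn x j], hPB x j⟩
  have hG0 : ∀ t x, G t x 0 =
      P x 0 * (1 - P x 0 - α₁ * P x 1 - δ₁ * P x 2) := by
    intro t x; rw [hG_def]; simp only [hF]; simp
  have hG1 : ∀ t x, G t x 1 =
      β₂ * P x 1 * (1 - P x 1 - α₂ * P x 0 - δ₂ * P x 3) := by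
    intro t x; rw [hG_def]; simp only [hF]; simp
  have hG2 : ∀ t x, G t x 2 = β₃ * (P x 1 - P x 2) := by
    intro t x; rw [hG_def]; simp only [hF]; simp
  have hG3 : ∀ t x, G t x 3 = β₄ * (i t - P x 3 - δ₄ * P x 3 * P x 1) := by
    intro t x; rw [hG_def]; simp only [hF]; simp
  -- global Lipschitz constant for G
  obtain ⟨Kc, hKc_def⟩ : ∃ x:ℝ, x = max (max (B * (1 + α₁ + δ₁) + (1 + B * (1 + α₁ + δ₁)))
      (β₂ * (B * (1 + α₂ + δ₂) + (1 + B * (1 + α₂ + δ₂)))))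
      (max (β₃ * 2) (β₄ * (1 + 2 * δ₄ * B))) := ⟨_, rfl⟩
  have hKc0 : 0 ≤ Kc := by
    have h : (0:ℝ) ≤ β₃ * 2 := by positivity
    rw [hKc_def]
    exact le_trans h (le_trans (le_max_left _ _) (le_max_right _ _))
  have hKcoe : ((Kc.toNNReal : ℝ≥0) : ℝ) = Kc := Real.coe_toNNReal _ hKc0
  have hK : ∀ t, LipschitzWith Kc.toNNReal (G t) := by
    intro t
    apply LipschitzWith.of_dist_le_mul
    intro x y
    obtain ⟨d, hd_def⟩ : ∃ r:ℝ, r = dist x y := ⟨_, rfl⟩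
    have hd : 0 ≤ d := hd_def ▸ dist_nonneg
    have hPd : ∀ j, |P x j - P y j| ≤ d := by
      intro j
      simp only [hP_def]
      refine (cl_lip _ _ _).trans ?_
      rw [← Real.dist_eq, hd_def]
      exact dist_le_pi_dist x y j
    rw [hKcoe, ← hd_def, dist_pi_le_iff (mul_nonneg hKc0 hd)]
    intro j
    rw [Real.dist_eq]
    have hax := hPabs x
    have hay := hPabs y
    fin_cases j
    · show |G t x 0 - G t y 0| ≤ Kc * d
      rw [hG0, hG0]
      have hq : |1 - P y 0 - α₁ * P y 1 - δ₁ * P y 2| ≤ 1 + B * (1 + α₁ + δ₁) := by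
        have h0 := hPnn y 0; have h1 := hPnn y 1; have h2 := hPnn y 2
        have g0 := hPB y 0; have g1 := hPB y 1; have g2 := hPB y 2
        rw [abs_le]; constructor <;> nlinarith
      have hpq : |(1 - P x 0 - α₁ * P x 1 - δ₁ * P x 2) -
          (1 - P y 0 - α₁ * P y 1 - δ₁ * P y 2)| ≤ (1 + α₁ + δ₁) * d := by
        have e0 := abs_le.mp (hPd 0); have e1 := abs_le.mp (hPd 1)
        have e2 := abs_le.mp (hPd 2)
        rw [abs_le]; constructor <;> nlinarith
      have := mul_diff_bound (hax 0) hq (hPd 0) hpq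
      have hle : B * (1 + α₁ + δ₁) + (1 + B * (1 + α₁ + δ₁)) ≤ Kc :=
        hKc_def ▸ le_trans (le_max_left _ _) (le_max_left _ _)
      nlinarith
    · show |G t x 1 - G t y 1| ≤ Kc * d
      rw [hG1, hG1]
      have hre : β₂ * P x 1 * (1 - P x 1 - α₂ * P x 0 - δ₂ * P x 3) -
          β₂ * P y 1 * (1 - P y 1 - α₂ * P y 0 - δ₂ * P y 3) =
          β₂ * (P x 1 * (1 - P x 1 - α₂ * P x 0 - δ₂ * P x 3) -
            P y 1 * (1 - P y 1 - α₂ * P y 0 - δ₂ * P y 3)) := by ring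
      rw [hre, abs_mul, abs_of_pos hβ₂]
      have hq : |1 - P y 1 - α₂ * P y 0 - δ₂ * P y 3| ≤ 1 + B * (1 + α₂ + δ₂) := by
        have h0 := hPnn y 0; have h1 := hPnn y 1; have h3 := hPnn y 3
        have g0 := hPB y 0; have g1 := hPB y 1; have g3 := hPB y 3
        rw [abs_le]; constructor <;> nlinarith
      have hpq : |(1 - P x 1 - α₂ * P x 0 - δ₂ * P x 3) -
          (1 - P y 1 - α₂ * P y 0 - δ₂ * P y 3)| ≤ (1 + α₂ + δ₂) * d := by
        have e0 := abs_le.mp (hPd 0); have e1 := abs_le.mp (hPd 1)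
        have e3 := abs_le.mp (hPd 3)
        rw [abs_le]; constructor <;> nlinarith
      have := mul_diff_bound (hax 1) hq (hPd 1) hpq
      have hle : β₂ * (B * (1 + α₂ + δ₂) + (1 + B * (1 + α₂ + δ₂))) ≤ Kc :=
        hKc_def ▸ le_trans (le_max_right _ _) (le_max_left _ _)
      nlinarith
    · show |G t x 2 - G t y 2| ≤ Kc * d
      rw [hG2, hG2]
      have hre : β₃ * (P x 1 - P x 2) - β₃ * (P y 1 - P y 2) =
          β₃ * ((P x 1 - P y 1) - (P x 2 - P y 2)) := by ring
      rw [hre, abs_mul, abs_of_pos hβ₃]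
      have e1 := abs_le.mp (hPd 1); have e2 := abs_le.mp (hPd 2)
      have hin : |(P x 1 - P y 1) - (P x 2 - P y 2)| ≤ 2 * d := by
        rw [abs_le]; constructor <;> nlinarith
      have hle : β₃ * 2 ≤ Kc := hKc_def ▸ le_trans (le_max_left _ _) (le_max_right _ _)
      nlinarith
    · show |G t x 3 - G t y 3| ≤ Kc * d
      rw [hG3, hG3]
      have hre : β₄ * (i t - P x 3 - δ₄ * P x 3 * P x 1) -
          β₄ * (i t - P y 3 - δ₄ * P y 3 * P y 1) =
          β₄ * (-(P x 3 - P y 3) - δ₄ * (P x 3 * P x 1 - P y 3 * P y 1)) := by ring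
      rw [hre, abs_mul, abs_of_pos hβ₄]
      have hmul := mul_diff_bound (hax 3) (hay 1) (hPd 3) (hPd 1)
      have e3 := abs_le.mp (hPd 3)
      have hmul' := abs_le.mp hmul
      have hin : |-(P x 3 - P y 3) - δ₄ * (P x 3 * P x 1 - P y 3 * P y 1)| ≤
          (1 + 2 * δ₄ * B) * d := by
        rw [abs_le]; constructor <;> nlinarith
      have hle : β₄ * (1 + 2 * δ₄ * B) ≤ Kc := hKc_def ▸ le_trans (le_max_right _ _) (le_max_right _ _)
      nlinarith
  -- continuity in time
  have hGcont : ∀ x, Continuous fun t => G t x := by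
    intro x
    rw [hG_def]
    have hfe : (fun t => F t (P x)) = fun t =>
        ![P x 0 * (1 - P x 0 - α₁ * P x 1 - δ₁ * P x 2),
          β₂ * P x 1 * (1 - P x 1 - α₂ * P x 0 - δ₂ * P x 3),
          β₃ * (P x 1 - P x 2),
          β₄ * (i t - P x 3 - δ₄ * P x 3 * P x 1)] := funext fun t => hF t (P x)
    rw [hfe]
    apply continuous_pi
    intro j
    fin_cases j
    · show Continuous fun _ : ℝ => P x 0 * (1 - P x 0 - α₁ * P x 1 - δ₁ * P x 2)
      exact continuous_const
    · show Continuous fun _ : ℝ => β₂ * P x 1 * (1 - P x 1 - α₂ * P x 0 - δ₂ * P x 3)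
      exact continuous_const
    · show Continuous fun _ : ℝ => β₃ * (P x 1 - P x 2)
      exact continuous_const
    · show Continuous fun t : ℝ => β₄ * (i t - P x 3 - δ₄ * P x 3 * P x 1)
      exact continuous_const.mul ((hi.sub continuous_const).sub continuous_const)
  -- local solutions on [-n, n]
  have key : ∀ n : ℕ, ∃ f : ℝ → (Fin 4 → ℝ), f 0 = u₀ ∧
      ∀ t ∈ Ioo (-(n:ℝ)) (n:ℝ), HasDerivAt f (G t (f t)) t := by
    intro n
    obtain ⟨In, hIn⟩ := isCompact_Icc.exists_bound_of_continuousOn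
      (s := Icc (-(n:ℝ)) (n:ℝ)) hi.continuousOn
    obtain ⟨C, hC_def⟩ : ∃ x:ℝ, x = max 0 (max (max (B * (1 + B * (1 + α₁ + δ₁)))
        (β₂ * (B * (1 + B * (1 + α₂ + δ₂)))))
        (max (β₃ * (2 * B)) (β₄ * (In + B + δ₄ * B * B)))) := ⟨_, rfl⟩
    have hC0 : 0 ≤ C := hC_def ▸ le_max_left _ _
    have hnorm : ∀ t ∈ Icc (-(n:ℝ)) (n:ℝ), ∀ x : Fin 4 → ℝ, ‖G t x‖ ≤ C := by
      intro t ht x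
      rw [pi_norm_le_iff_of_nonneg hC0]
      intro j
      rw [Real.norm_eq_abs]
      have hIt : |i t| ≤ In := by have := hIn t ht; rwa [Real.norm_eq_abs] at this
      have h0x := hPnn x
      have hBx := hPB x
      fin_cases j
      · show |G t x 0| ≤ C
        rw [hG0]
        have hq : |1 - P x 0 - α₁ * P x 1 - δ₁ * P x 2| ≤ 1 + B * (1 + α₁ + δ₁) := by
          rw [abs_le]
          constructor <;> nlinarith [h0x 0, h0x 1, h0x 2, hBx 0, hBx 1, hBx 2]
        have h := abs_mul_le' (hPabs x 0) hq
        have hle : B * (1 + B * (1 + α₁ + δ₁)) ≤ C := hC_def ▸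
          le_trans (le_trans (le_max_left _ _) (le_max_left _ _)) (le_max_right _ _)
        linarith
      · show |G t x 1| ≤ C
        rw [hG1, mul_assoc, abs_mul, abs_of_pos hβ₂]
        have hq : |1 - P x 1 - α₂ * P x 0 - δ₂ * P x 3| ≤ 1 + B * (1 + α₂ + δ₂) := by
          rw [abs_le]
          constructor <;> nlinarith [h0x 0, h0x 1, h0x 3, hBx 0, hBx 1, hBx 3]
        have h := abs_mul_le' (hPabs x 1) hq
        have hle : β₂ * (B * (1 + B * (1 + α₂ + δ₂))) ≤ C := hC_def ▸
          le_trans (le_trans (le_max_right _ _) (le_max_left _ _)) (le_max_right _ _)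
        nlinarith [mul_le_mul_of_nonneg_left h hβ₂.le]
      · show |G t x 2| ≤ C
        rw [hG2, abs_mul, abs_of_pos hβ₃]
        have hq : |P x 1 - P x 2| ≤ 2 * B := by
          rw [abs_le]
          constructor <;> nlinarith [h0x 1, h0x 2, hBx 1, hBx 2]
        have hle : β₃ * (2 * B) ≤ C := hC_def ▸
          le_trans (le_trans (le_max_left _ _) (le_max_right _ _)) (le_max_right _ _)
        nlinarith [mul_le_mul_of_nonneg_left hq hβ₃.le]
      · show |G t x 3| ≤ C
        rw [hG3, abs_mul, abs_of_pos hβ₄]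
        have hp : P x 3 * P x 1 ≤ B * B :=
          mul_le_mul (hBx 3) (hBx 1) (h0x 1) (le_trans (h0x 3) (hBx 3))
        have hp0 : 0 ≤ P x 3 * P x 1 := mul_nonneg (h0x 3) (h0x 1)
        have hIt' := abs_le.mp hIt
        have hq : |i t - P x 3 - δ₄ * P x 3 * P x 1| ≤ In + B + δ₄ * B * B := by
          rw [abs_le]
          constructor <;>
            nlinarith [h0x 3, hBx 3, mul_le_mul_of_nonneg_left hp hδ₄.le,
              mul_nonneg hδ₄.le hp0, hIt'.1, hIt'.2]
        have hle : β₄ * (In + B + δ₄ * B * B) ≤ C := hC_def ▸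
          le_trans (le_trans (le_max_right _ _) (le_max_right _ _)) (le_max_right _ _)
        nlinarith [mul_le_mul_of_nonneg_left hq hβ₄.le]
    have hpl : IsPicardLindelof G (tmin := -(n:ℝ)) (tmax := (n:ℝ))
        ⟨0, ⟨neg_nonpos.mpr n.cast_nonneg, n.cast_nonneg⟩⟩ u₀ (C * n).toNNReal 0 C.toNNReal
        Kc.toNNReal :=
      { lipschitzOnWith := fun t _ => (hK t).lipschitzOnWith
        continuousOn := fun x _ => (hGcont x).continuousOn
        norm_le := fun t ht x _ => by rw [Real.coe_toNNReal _ hC0]; exact hnorm t ht x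
        mul_max_le := by
          rw [Real.coe_toNNReal _ hC0, Real.coe_toNNReal _ (mul_nonneg hC0 n.cast_nonneg)]
          show C * max ((n:ℝ) - 0) (0 - -(n:ℝ)) ≤ C * n - ((0:ℝ≥0):ℝ)
          simp }
    obtain ⟨f, hf0, hf⟩ := hpl.exists_eq_forall_mem_Icc_hasDerivWithinAt₀
    exact ⟨f, hf0, fun t ht =>
      (hf t (Ioo_subset_Icc_self ht)).hasDerivAt (Icc_mem_nhds ht.1 ht.2)⟩
  choose f hf0 hfd using key
  have agree : ∀ (n m : ℕ) (t : ℝ), |t| < n → |t| < m → f n t = f m t := by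
    intro n m t htn htm
    have habs : 0 ≤ |t| := abs_nonneg t
    have hta : |t| < min (n:ℝ) (m:ℝ) := lt_min htn htm
    have ha0 : 0 < min (n:ℝ) (m:ℝ) := lt_of_le_of_lt habs hta
    have h0mem : (0:ℝ) ∈ Ioo (-(min (n:ℝ) (m:ℝ))) (min (n:ℝ) (m:ℝ)) := ⟨by linarith, ha0⟩
    have hsub_n : Ioo (-(min (n:ℝ) (m:ℝ))) (min (n:ℝ) (m:ℝ)) ⊆ Ioo (-(n:ℝ)) (n:ℝ) :=
      Ioo_subset_Ioo (neg_le_neg (min_le_left _ _)) (min_le_left _ _)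
    have hsub_m : Ioo (-(min (n:ℝ) (m:ℝ))) (min (n:ℝ) (m:ℝ)) ⊆ Ioo (-(m:ℝ)) (m:ℝ) :=
      Ioo_subset_Ioo (neg_le_neg (min_le_right _ _)) (min_le_right _ _)
    have huniq := ODE_solution_unique_of_mem_Ioo (v := G) (s := fun _ => univ)
      (K := Kc.toNNReal) (fun s _ => (hK s).lipschitzOnWith) h0mem
      (fun s hs => ⟨hfd n s (hsub_n hs), trivial⟩)
      (fun s hs => ⟨hfd m s (hsub_m hs), trivial⟩)
      ((hf0 n).trans (hf0 m).symm)
    exact huniq (abs_lt.mp hta)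
  obtain ⟨u, hu_def⟩ : ∃ q : ℝ → (Fin 4 → ℝ), q = fun t => f (⌈|t|⌉₊ + 1) t := ⟨_, rfl⟩
  have hlt : ∀ t : ℝ, |t| < ((⌈|t|⌉₊ + 1 : ℕ) : ℝ) := by
    intro t
    push_cast
    have := Nat.le_ceil |t|
    linarith
  have hu_eq : ∀ (n : ℕ) (t : ℝ), |t| < n → u t = f n t := by
    intro n t h
    rw [hu_def]
    exact agree _ n t (hlt t) h
  have hu0 : u 0 = u₀ := by
    rw [hu_eq 1 0 (by norm_num)]
    exact hf0 1
  have huD : ∀ t, HasDerivAt u (G t (u t)) t := by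
    intro t
    have h1 : HasDerivAt (f (⌈|t|⌉₊ + 1)) (G t (f (⌈|t|⌉₊ + 1) t)) t :=
      hfd _ t (abs_lt.mp (hlt t))
    have heq : u =ᶠ[nhds t] f (⌈|t|⌉₊ + 1) := by
      have hopen : IsOpen {s : ℝ | |s| < ((⌈|t|⌉₊ + 1 : ℕ):ℝ)} :=
        isOpen_lt continuous_abs continuous_const
      filter_upwards [hopen.mem_nhds (hlt t)] with s hs
      exact hu_eq _ s hs
    have h2 := h1.congr_of_eventuallyEq heq
    rwa [← hu_eq _ t (hlt t)] at h2
  have hucoord : ∀ t j, HasDerivAt (fun s => u s j) (G t (u t) j) t :=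
    fun t j => hasDerivAt_pi.mp (huD t) j
  have hMv0 : Mv 0 = M0 := by rw [hMv_def]; rfl
  have hMv1 : Mv 1 = M1 := by rw [hMv_def]; rfl
  have hMv2 : Mv 2 = M2 := by rw [hMv_def]; rfl
  have hMv3 : Mv 3 = M3 := by rw [hMv_def]; rfl
  -- lower bounds for u
  have low0 : ∀ t, 0 ≤ t → 0 ≤ u t 0 := by
    refine barrier_ge (f := fun s => G s (u s) 0) (fun t ht => hucoord t 0)
      (by rw [hu0]; exact hu₀ 0) ?_
    intro t ht hle
    show 0 ≤ G t (u t) 0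
    rw [hG0]
    have hz : P (u t) 0 = 0 := by simp only [hP_def]; exact cl_eq_zero hle
    rw [hz]
    simp
  have low1 : ∀ t, 0 ≤ t → 0 ≤ u t 1 := by
    refine barrier_ge (f := fun s => G s (u s) 1) (fun t ht => hucoord t 1)
      (by rw [hu0]; exact hu₀ 1) ?_
    intro t ht hle
    show 0 ≤ G t (u t) 1
    rw [hG1]
    have hz : P (u t) 1 = 0 := by simp only [hP_def]; exact cl_eq_zero hle
    rw [hz]
    simp
  have low2 : ∀ t, 0 ≤ t → 0 ≤ u t 2 := by
    refine barrier_ge (f := fun s => G s (u s) 2) (fun t ht => hucoord t 2)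
      (by rw [hu0]; exact hu₀ 2) ?_
    intro t ht hle
    show 0 ≤ G t (u t) 2
    rw [hG2]
    have hz : P (u t) 2 = 0 := by simp only [hP_def]; exact cl_eq_zero hle
    rw [hz, sub_zero]
    exact mul_nonneg hβ₃.le (hPnn _ 1)
  have low3 : ∀ t, 0 ≤ t → 0 ≤ u t 3 := by
    refine barrier_ge (f := fun s => G s (u s) 3) (fun t ht => hucoord t 3)
      (by rw [hu0]; exact hu₀ 3) ?_
    intro t ht hle
    show 0 ≤ G t (u t) 3
    rw [hG3]
    have hz : P (u t) 3 = 0 := by simp only [hP_def]; exact cl_eq_zero hle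
    rw [hz]
    have h0 := (hirange t ht).1
    have := mul_nonneg hβ₄.le h0
    nlinarith
  -- upper bounds for u
  have up0 : ∀ t, 0 ≤ t → u t 0 ≤ M0 := by
    refine barrier_le (f := fun s => G s (u s) 0) (fun t ht => hucoord t 0)
      (by rw [hu0]; exact hu₀0) ?_
    intro t ht hge
    show G t (u t) 0 ≤ 0
    rw [hG0]
    have hz : P (u t) 0 = M0 := by
      simp only [hP_def]
      rw [hMv0]
      exact cl_eq_top (by linarith) hge
    rw [hz]
    have hA : 0 ≤ α₁ * P (u t) 1 := mul_nonneg hα₁.le (hPnn _ 1)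
    have hD : 0 ≤ δ₁ * P (u t) 2 := mul_nonneg hδ₁.le (hPnn _ 2)
    have hM0nn : (0:ℝ) ≤ M0 := by linarith
    nlinarith [mul_nonneg hM0nn hA, mul_nonneg hM0nn hD,
      mul_nonneg hM0nn (by linarith : (0:ℝ) ≤ M0 - 1)]
  have up1 : ∀ t, 0 ≤ t → u t 1 ≤ M1 := by
    refine barrier_le (f := fun s => G s (u s) 1) (fun t ht => hucoord t 1)
      (by rw [hu0]; exact hu₀1) ?_
    intro t ht hge
    show G t (u t) 1 ≤ 0
    rw [hG1]
    have hz : P (u t) 1 = M1 := by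
      simp only [hP_def]
      rw [hMv1]
      exact cl_eq_top (by linarith) hge
    rw [hz]
    have hA : 0 ≤ α₂ * P (u t) 0 := mul_nonneg hα₂.le (hPnn _ 0)
    have hD : 0 ≤ δ₂ * P (u t) 3 := mul_nonneg hδ₂.le (hPnn _ 3)
    have hM1nn : (0:ℝ) ≤ M1 := by linarith
    have hq : 1 - M1 - α₂ * P (u t) 0 - δ₂ * P (u t) 3 ≤ 0 := by linarith
    nlinarith [mul_nonneg (mul_nonneg hβ₂.le hM1nn)
      (by linarith : (0:ℝ) ≤ -(1 - M1 - α₂ * P (u t) 0 - δ₂ * P (u t) 3))]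
  have up2 : ∀ t, 0 ≤ t → u t 2 ≤ M2 := by
    refine barrier_le (f := fun s => G s (u s) 2) (fun t ht => hucoord t 2)
      (by rw [hu0]; exact hu₀2) ?_
    intro t ht hge
    show G t (u t) 2 ≤ 0
    rw [hG2]
    have hz : P (u t) 2 = M2 := by
      simp only [hP_def]
      rw [hMv2]
      exact cl_eq_top (by linarith) hge
    rw [hz]
    have hle1 : P (u t) 1 ≤ M1 := by
      simp only [hP_def]
      rw [hMv1]
      exact cl_le (by linarith) _
    nlinarith [mul_nonneg hβ₃.le (by linarith : (0:ℝ) ≤ M2 - P (u t) 1)]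
  have up3 : ∀ t, 0 ≤ t → u t 3 ≤ M3 := by
    refine barrier_le (f := fun s => G s (u s) 3) (fun t ht => hucoord t 3)
      (by rw [hu0]; exact hu₀3) ?_
    intro t ht hge
    show G t (u t) 3 ≤ 0
    rw [hG3]
    have hz : P (u t) 3 = M3 := by
      simp only [hP_def]
      rw [hMv3]
      exact cl_eq_top hM3pos.le hge
    rw [hz]
    have hiM' : i t ≤ iM := (hirange t ht).2
    have hprod : 0 ≤ δ₄ * M3 * P (u t) 1 :=
      mul_nonneg (mul_nonneg hδ₄.le hM3pos.le) (hPnn _ 1)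
    nlinarith [mul_nonneg hβ₄.le
      (by linarith : (0:ℝ) ≤ M3 + δ₄ * M3 * P (u t) 1 - i t)]
  -- the clamp is the identity along u
  have hPu : ∀ t, 0 ≤ t → P (u t) = u t := by
    intro t ht
    funext j
    fin_cases j
    · show P (u t) 0 = u t 0
      simp only [hP_def]; rw [hMv0]; exact cl_eq (low0 t ht) (up0 t ht)
    · show P (u t) 1 = u t 1
      simp only [hP_def]; rw [hMv1]; exact cl_eq (low1 t ht) (up1 t ht)
    · show P (u t) 2 = u t 2
      simp only [hP_def]; rw [hMv2]; exact cl_eq (low2 t ht) (up2 t ht)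
    · show P (u t) 3 = u t 3
      simp only [hP_def]; rw [hMv3]; exact cl_eq (low3 t ht) (up3 t ht)
  have huF : ∀ t, 0 ≤ t → HasDerivAt u (F t (u t)) t := by
    intro t ht
    have h := huD t
    simp only [hG_def] at h
    rwa [hPu t ht] at h
  refine ⟨u, hu0, huF, ?_, ?_, ?_⟩
  · intro t ht j
    fin_cases j
    · exact low0 t ht
    · exact low1 t ht
    · exact low2 t ht
    · exact low3 t ht
  · intro t ht
    refine ⟨⟨low0 t ht, ?_⟩, ⟨low1 t ht, ?_⟩, ⟨low2 t ht, ?_⟩, ⟨low3 t ht, ?_⟩⟩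
    · rw [← hM0_def]; exact up0 t ht
    · rw [← hM1_def]; exact up1 t ht
    · rw [← hM2_def]; exact up2 t ht
    · rw [← hM3_def]; exact up3 t ht
  -- uniqueness
  · intro v hv0 hvnn hvD
    have hvcoord : ∀ t, 0 ≤ t → ∀ j, HasDerivAt (fun s => v s j) (F t (v t) j) t :=
      fun t ht j => hasDerivAt_pi.mp (hvD t ht) j
    have hF0 : ∀ t x, F t x 0 = x 0 * (1 - x 0 - α₁ * x 1 - δ₁ * x 2) := by
      intro t x; rw [hF]; simp
    have hF1 : ∀ t x, F t x 1 = β₂ * x 1 * (1 - x 1 - α₂ * x 0 - δ₂ * x 3) := by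
      intro t x; rw [hF]; simp
    have hF2 : ∀ t x, F t x 2 = β₃ * (x 1 - x 2) := by
      intro t x; rw [hF]; simp
    have hF3 : ∀ t x, F t x 3 = β₄ * (i t - x 3 - δ₄ * x 3 * x 1) := by
      intro t x; rw [hF]; simp
    have vup0 : ∀ t, 0 ≤ t → v t 0 ≤ M0 := by
      refine barrier_le (f := fun s => F s (v s) 0) (fun t ht => hvcoord t ht 0)
        (by rw [hv0]; exact hu₀0) ?_
      intro t ht hge
      show F t (v t) 0 ≤ 0
      rw [hF0]
      have h1 := hvnn t ht 1
      have h2 := hvnn t ht 2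
      have hq : 1 - v t 0 - α₁ * v t 1 - δ₁ * v t 2 ≤ 0 := by
        nlinarith [mul_nonneg hα₁.le h1, mul_nonneg hδ₁.le h2]
      nlinarith [mul_nonneg (by linarith : (0:ℝ) ≤ v t 0)
        (by linarith : (0:ℝ) ≤ -(1 - v t 0 - α₁ * v t 1 - δ₁ * v t 2))]
    have vup1 : ∀ t, 0 ≤ t → v t 1 ≤ M1 := by
      refine barrier_le (f := fun s => F s (v s) 1) (fun t ht => hvcoord t ht 1)
        (by rw [hv0]; exact hu₀1) ?_
      intro t ht hge
      show F t (v t) 1 ≤ 0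
      rw [hF1]
      have h0 := hvnn t ht 0
      have h3 := hvnn t ht 3
      have hq : 1 - v t 1 - α₂ * v t 0 - δ₂ * v t 3 ≤ 0 := by
        nlinarith [mul_nonneg hα₂.le h0, mul_nonneg hδ₂.le h3]
      nlinarith [mul_nonneg (mul_nonneg hβ₂.le (by linarith : (0:ℝ) ≤ v t 1))
        (by linarith : (0:ℝ) ≤ -(1 - v t 1 - α₂ * v t 0 - δ₂ * v t 3))]
    have vup2 : ∀ t, 0 ≤ t → v t 2 ≤ M2 := by
      refine barrier_le (f := fun s => F s (v s) 2) (fun t ht => hvcoord t ht 2)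
        (by rw [hv0]; exact hu₀2) ?_
      intro t ht hge
      show F t (v t) 2 ≤ 0
      rw [hF2]
      have h1 : v t 1 ≤ M1 := vup1 t ht
      nlinarith [mul_nonneg hβ₃.le (by linarith : (0:ℝ) ≤ v t 2 - v t 1)]
    have vup3 : ∀ t, 0 ≤ t → v t 3 ≤ M3 := by
      refine barrier_le (f := fun s => F s (v s) 3) (fun t ht => hvcoord t ht 3)
        (by rw [hv0]; exact hu₀3) ?_
      intro t ht hge
      show F t (v t) 3 ≤ 0
      rw [hF3]
      have hiM' : i t ≤ iM := (hirange t ht).2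
      have hprod : 0 ≤ δ₄ * v t 3 * v t 1 :=
        mul_nonneg (mul_nonneg hδ₄.le (by linarith)) (hvnn t ht 1)
      nlinarith [mul_nonneg hβ₄.le
        (by linarith : (0:ℝ) ≤ v t 3 + δ₄ * v t 3 * v t 1 - i t)]
    have hPv : ∀ t, 0 ≤ t → P (v t) = v t := by
      intro t ht
      funext j
      fin_cases j
      · show P (v t) 0 = v t 0
        simp only [hP_def]; rw [hMv0]; exact cl_eq (hvnn t ht 0) (vup0 t ht)
      · show P (v t) 1 = v t 1
        simp only [hP_def]; rw [hMv1]; exact cl_eq (hvnn t ht 1) (vup1 t ht)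
      · show P (v t) 2 = v t 2
        simp only [hP_def]; rw [hMv2]; exact cl_eq (hvnn t ht 2) (vup2 t ht)
      · show P (v t) 3 = v t 3
        simp only [hP_def]; rw [hMv3]; exact cl_eq (hvnn t ht 3) (vup3 t ht)
    have hvG : ∀ t, 0 ≤ t → HasDerivAt v (G t (v t)) t := by
      intro t ht
      have h := hvD t ht
      have he : G t (v t) = F t (v t) := by
        simp only [hG_def]
        rw [hPv t ht]
      rwa [← he] at h
    intro t ht
    have huniq := ODE_solution_unique (v := G) (K := Kc.toNNReal)
      (fun s => hK s)
      (f := v) (g := u) (a := 0) (b := t)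
      (fun s hs => ((hvD s hs.1).continuousAt).continuousWithinAt)
      (fun s hs => (hvG s hs.1).hasDerivWithinAt)
      (fun s _ => ((huD s).continuousAt).continuousWithinAt)
      (fun s _ => (huD s).hasDerivWithinAt)
      (hv0.trans hu0.symm)
    exact huniq ⟨ht, le_rfl⟩
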